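/- Two triangles are congruent if they have an equal side, an equal angle opposite that side, and equal bisectors of the external angle at that vertex. Precisely: if triangles ABC and ABC' satisfy ∠ACB = ∠AC'B, with C and C' on the same side of AB and of its perpendicular bisector, and the external angle bisectors at C and C' (from the vertex to line AB) have equal lengths, then the triangles are congruent. -/

import Mathlib

open EuclideanGeometry Real

noncomputable section

/-- The Euclidean plane. -/
abbrev Pt : Type := EuclideanSpace ℝ (Fin 2)

lemma sameRay_pos {x y : ℝ} (h : SameRay ℝ x y) (hx : x ≠ 0) (hy : y ≠ 0) : 0 < x * y := by
  rcases h with h | h | ⟨r₁, r₂, hr₁, hr₂, he⟩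
  · exact absurd h hx
  · exact absurd h hy
  · simp only [smul_eq_mul] at he
    rcases lt_trichotomy x 0 with hx0 | hx0 | hx0
    · rcases lt_trichotomy y 0 with hy0 | hy0 | hy0
      · exact mul_pos_of_neg_of_neg hx0 hy0
      · exact absurd hy0 hy
      · nlinarith
    · exact absurd hx0 hx
    · rcases lt_trichotomy y 0 with hy0 | hy0 | hy0
      · nlinarith
      · exact absurd hy0 hy
      · positivity

lemma triangle_aux (A B C D E : Pt)
    (hABC : AffineIndependent ℝ ![A, B, C])
    (hD : D ∈ segment ℝ A B) (hbisD : ∠ A C D = ∠ B C D)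
    (hE : E ∈ affineSpan ℝ ({A, B} : Set Pt))
    (hperp : (inner ℝ (E -ᵥ C) (D -ᵥ C) : ℝ) = 0) :
    ∃ s H : ℝ, 0 < H ∧
      (dist C A)^2 = s^2 * ‖B -ᵥ A‖^2 + H ∧
      (dist C B)^2 = (1-s)^2 * ‖B -ᵥ A‖^2 + H ∧
      (inner ℝ (A -ᵥ C) (B -ᵥ C) : ℝ) = H - s*(1-s) * ‖B -ᵥ A‖^2 ∧
      (dist C E)^2 * (dist C B - dist C A)^2 =
        2 * (dist C B * dist C A) * (dist C B * dist C A - inner ℝ (A -ᵥ C) (B -ᵥ C)) ∧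
      dist C B ≠ dist C A ∧
      (inner ℝ (C -ᵥ midpoint ℝ A B) (B -ᵥ A) : ℝ) = (s - 1/2) * ‖B -ᵥ A‖^2 := by
  have hAB : A ≠ B := by
    intro h
    exact (hABC.injective.ne (by decide : (0 : Fin 3) ≠ 1)) (by simpa using h)
  set v : Pt := B -ᵥ A with hv
  have hvne : v ≠ 0 := by
    exact fun h => hAB (vsub_eq_zero_iff_eq.mp h).symm
  set c2 : ℝ := ‖v‖^2 with hc2
  have hc2pos : 0 < c2 := pow_pos (norm_pos_iff.mpr hvne) 2
  set s : ℝ := (inner ℝ (C -ᵥ A) v : ℝ) / c2 with hs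
  set w : Pt := (C -ᵥ A) - s • v with hw
  have hvv : (inner ℝ v v : ℝ) = c2 := real_inner_self_eq_norm_sq v
  have hwv : (inner ℝ w v : ℝ) = 0 := by
    rw [hw, inner_sub_left, real_inner_smul_left, hvv, hs,
      div_mul_cancel₀ _ (ne_of_gt hc2pos), sub_self]
  have hvw : (inner ℝ v w : ℝ) = 0 := by rw [real_inner_comm]; exact hwv
  set H : ℝ := ‖w‖^2 with hH
  -- C is not on the line AB
  have hCnot : C ∉ affineSpan ℝ ({A, B} : Set Pt) := by
    intro hmem
    have hcol : Collinear ℝ ({C, A, B} : Set Pt) :=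
      collinear_insert_of_mem_affineSpan_pair hmem
    have : Collinear ℝ ({A, B, C} : Set Pt) := by
      have : ({A, B, C} : Set Pt) ⊆ {C, A, B} := by intro x hx; simp at hx ⊢; tauto
      exact hcol.subset this
    exact (affineIndependent_iff_not_collinear_set.mp hABC) this
  have hHpos : 0 < H := by
    rcases eq_or_lt_of_le (norm_nonneg w) with h0 | h0
    · exfalso
      have hw0 : w = 0 := by simpa using h0.symm
      have : C = s • v +ᵥ A := by
        have : C -ᵥ A = s • v := by
          have := hw0
          rw [hw] at this
          linear_combination (norm := module) this
        rw [← this, vsub_vadd]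
      apply hCnot
      rw [this]
      exact smul_vsub_vadd_mem_affineSpan_pair s A B
    · positivity
  -- representation of points on the line
  have hrep : ∀ x : ℝ, (x • v +ᵥ A) -ᵥ C = (x - s) • v - w := by
    intro x
    rw [vadd_vsub_assoc, ← neg_vsub_eq_vsub_rev C A, hw]
    module
  have hinner : ∀ x y : ℝ,
      (inner ℝ ((x • v +ᵥ A) -ᵥ C) ((y • v +ᵥ A) -ᵥ C) : ℝ) = (x - s) * (y - s) * c2 + H := by
    intro x y
    rw [hrep, hrep]
    simp only [inner_sub_left, inner_sub_right, real_inner_smul_left, real_inner_smul_right,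
      hwv, hvw]
    rw [real_inner_self_eq_norm_sq, real_inner_self_eq_norm_sq, ← hc2, ← hH]
    ring
  have hA0 : A = (0:ℝ) • v +ᵥ A := by simp
  have hB1 : B = (1:ℝ) • v +ᵥ A := by
    rw [one_smul, hv, vsub_vadd]
  -- get parameters for D and E
  obtain ⟨u₁, u₂, hu₁, hu₂, huu, hDcomb⟩ := hD
  have hDrep : D = u₂ • v +ᵥ A := by
    have h1 : u₁ = 1 - u₂ := by linarith
    rw [← hDcomb, h1, hv]
    simp only [vsub_eq_sub, vadd_eq_add]
    module
  obtain ⟨ε, hErep'⟩ : ∃ r : ℝ, r • (B -ᵥ A) = E -ᵥ A := by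
    rw [← vadd_left_mem_affineSpan_pair (k := ℝ) (p₁ := A) (p₂ := B) (v := E -ᵥ A)]
    rwa [vsub_vadd]
  rw [← hv] at hErep'
  have hErep : E = ε • v +ᵥ A := by rw [hErep', vsub_vadd]
  set δ : ℝ := u₂ with hδ
  set a : ℝ := dist C B with ha'
  set b : ℝ := dist C A with hb'
  have hbn : b = ‖A -ᵥ C‖ := by rw [hb', dist_comm, dist_eq_norm_vsub Pt]
  have han : a = ‖B -ᵥ C‖ := by rw [ha', dist_comm, dist_eq_norm_vsub Pt]
  have hb2 : b^2 = (0 - s) * (0 - s) * c2 + H := by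
    rw [hbn, ← real_inner_self_eq_norm_sq]
    rw [hA0, hinner]
  have ha2 : a^2 = (1 - s) * (1 - s) * c2 + H := by
    rw [han, ← real_inner_self_eq_norm_sq]
    rw [hB1, hinner]
  have hcg : (inner ℝ (A -ᵥ C) (B -ᵥ C) : ℝ) = (0 - s) * (1 - s) * c2 + H := by
    rw [hA0, hB1, hinner]
  have hb0 : 0 ≤ b := by rw [hb']; exact dist_nonneg
  have ha0 : 0 ≤ a := by rw [ha']; exact dist_nonneg
  have hCA : C -ᵥ A = s • v + w := by rw [hw]; abel
  clear_value v c2 s w H a b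
  have hbpos : 0 < b := by
    have h2 : 0 < b^2 := by
      have h3 := mul_nonneg (mul_self_nonneg (0 - s)) hc2pos.le
      rw [hb2]; linarith
    exact lt_of_le_of_ne hb0 (fun h => by rw [← h] at h2; norm_num at h2)
  have hapos : 0 < a := by
    have h2 : 0 < a^2 := by
      have h3 := mul_nonneg (mul_self_nonneg (1 - s)) hc2pos.le
      rw [ha2]; linarith
    exact lt_of_le_of_ne ha0 (fun h => by rw [← h] at h2; norm_num at h2)
  -- the perpendicularity relation
  have hperp2 : (ε - s) * (δ - s) * c2 + H = 0 := by
    rw [← hinner ε δ, ← hDrep, ← hErep]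
    exact hperp
  have hδs : δ ≠ s := by
    intro h
    rw [h, sub_self, mul_zero, zero_mul, zero_add] at hperp2
    linarith
  -- D ≠ C
  have hmD : (0:ℝ) < ‖D -ᵥ C‖ := by
    rw [norm_pos_iff]
    intro h0
    have hDD : (inner ℝ (D -ᵥ C) (D -ᵥ C) : ℝ) = (δ - s) * (δ - s) * c2 + H := by
      nth_rewrite 1 [hDrep]
      nth_rewrite 1 [hDrep]
      rw [hinner]
    rw [h0, inner_zero_left] at hDD
    have := mul_nonneg (mul_self_nonneg (δ - s)) hc2pos.le
    linarith
  -- the bisector relation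
  have hbis : a * ((0 - s) * (δ - s) * c2 + H) = b * ((1 - s) * (δ - s) * c2 + H) := by
    have hcos := congrArg Real.cos hbisD
    rw [EuclideanGeometry.angle, EuclideanGeometry.angle,
      InnerProductGeometry.cos_angle, InnerProductGeometry.cos_angle] at hcos
    rw [← hbn, ← han] at hcos
    have h1 : (inner ℝ (A -ᵥ C) (D -ᵥ C) : ℝ) = (0 - s) * (δ - s) * c2 + H := by
      nth_rewrite 1 [hA0]
      nth_rewrite 1 [hDrep]
      rw [hinner]
    have h2 : (inner ℝ (B -ᵥ C) (D -ᵥ C) : ℝ) = (1 - s) * (δ - s) * c2 + H := by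
      nth_rewrite 1 [hB1]
      nth_rewrite 1 [hDrep]
      rw [hinner]
    rw [h1, h2, div_eq_div_iff (by positivity) (by positivity)] at hcos
    have h4 : (a * ((0 - s) * (δ - s) * c2 + H)) * ‖D -ᵥ C‖
        = (b * ((1 - s) * (δ - s) * c2 + H)) * ‖D -ᵥ C‖ := by linear_combination hcos
    exact mul_right_cancel₀ hmD.ne' h4
  -- a ≠ b
  have hab : a ≠ b := by
    intro h
    rw [h] at hbis
    have h5 := mul_left_cancel₀ hbpos.ne' hbis
    have h6 : (δ - s) * c2 = 0 := by linear_combination -h5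
    rcases mul_eq_zero.mp h6 with h7 | h7
    · exact hδs (by linarith)
    · exact hc2pos.ne' h7
  -- key relation for ε
  have h1 : (δ - s) * c2 * (a * s + b * (1 - s)) = (a - b) * H := by
    linear_combination -hbis
  have h3 : H * ((ε - s) * (a - b)) = H * (-(a * s + b * (1 - s))) := by
    linear_combination (-(ε - s)) * h1 + (a * s + b * (1 - s)) * hperp2
  have heps : (ε - s) * (a - b) = -(a * s + b * (1 - s)) :=
    mul_left_cancel₀ hHpos.ne' h3
  -- the length of CE
  have hE2 : (dist C E)^2 = (ε - s) * (ε - s) * c2 + H := by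
    rw [dist_comm, dist_eq_norm_vsub Pt, ← real_inner_self_eq_norm_sq]
    nth_rewrite 1 [hErep]
    nth_rewrite 1 [hErep]
    rw [hinner]
  have hsq : ((ε - s) * (a - b))^2 = (a * s + b * (1 - s))^2 := by rw [heps]; ring
  have hF2 : (dist C E)^2 * (a - b)^2
      = 2 * (a * b) * (a * b - inner ℝ (A -ᵥ C) (B -ᵥ C)) := by
    rw [hE2, hcg]
    linear_combination c2 * hsq + (-(a^2)) * hb2 + (-(b^2)) * ha2
  -- midpoint relation
  have hM : midpoint ℝ A B -ᵥ A = (1/2 : ℝ) • v := by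
    rw [midpoint_vsub_left, invOf_eq_inv, ← hv]
    norm_num
  have hmid : (inner ℝ (C -ᵥ midpoint ℝ A B) v : ℝ) = (s - 1/2) * c2 := by
    rw [← vsub_sub_vsub_cancel_right C (midpoint ℝ A B) A, hCA, hM]
    rw [inner_sub_left, inner_add_left, real_inner_smul_left, real_inner_smul_left, hwv, hvv]
    ring
  refine ⟨s, H, hHpos, by linear_combination hb2, by linear_combination ha2,
    by linear_combination hcg, by linear_combination hF2, ?_, hmid⟩
  exact hab

lemma pos_of_mul_pos_right' {x y : ℝ} (h : 0 < x * y) (hy : 0 < y) : 0 < x := by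
  by_contra h'
  push_neg at h'
  nlinarith

lemma eq_of_sq_eq' {a b : ℝ} (ha : 0 ≤ a) (hb : 0 ≤ b) (h : a^2 = b^2) : a = b := by
  nlinarith [sq_nonneg (a - b)]

lemma kappa_pos' {p g c h : ℝ} (hp : 0 < p) (hch : 0 < c * h) (hk : (p - g) * (p + g) = c * h) :
    0 < p - g := by nlinarith

lemma inner_vsub_of_mem_perpBisector {P1 P2 p X : Pt}
    (hp : p ∈ AffineSubspace.perpBisector P1 P2) :
    (inner ℝ (P2 -ᵥ P1) (X -ᵥ p) : ℝ) = inner ℝ (P2 -ᵥ P1) (X -ᵥ midpoint ℝ P1 P2) := by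
  have h0 : (inner ℝ (P2 -ᵥ P1) (p -ᵥ midpoint ℝ P1 P2) : ℝ) =
      0 := AffineSubspace.mem_perpBisector_iff_inner_eq_zero'.mp hp
  rw [← vsub_sub_vsub_cancel_right X p (midpoint ℝ P1 P2), inner_sub_right, h0, sub_zero]

lemma key_alg {a b a' b' g g' c k : ℝ}
    (hap : 0 < a) (hbp : 0 < b) (hap' : 0 < a') (hbp' : 0 < b')
    (hκ : 0 < a * b - g) (hκ' : 0 < a' * b' - g')
    (hq : c = (a - b)^2 + 2 * (a * b - g)) (hq' : c = (a' - b')^2 + 2 * (a' * b' - g'))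
    (hF : k * (a - b)^2 = 2 * (a * b) * (a * b - g))
    (hF' : k * (a' - b')^2 = 2 * (a' * b') * (a' * b' - g'))
    (hX : a ≠ b) (hX' : a' ≠ b')
    (hcross : (a * b - g) * (a' * b') = (a' * b' - g') * (a * b))
    (hsgn : 0 < (a - b) * (a' - b')) :
    a = a' ∧ b = b' := by
  have hXpos : 0 < (a - b)^2 := pow_two_pos_of_ne_zero (sub_ne_zero.mpr hX)
  have hYpos : 0 < (a' - b')^2 := pow_two_pos_of_ne_zero (sub_ne_zero.mpr hX')
  have hkpos : 0 < k := by
    have h1 : 0 < k * (a - b)^2 := by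
      rw [hF]
      have := mul_pos (mul_pos hap hbp) hκ
      linarith
    exact pos_of_mul_pos_right' h1 hXpos
  -- κ² Y = κ'² X
  have h5 : k * ((a*b-g)^2 * (a'-b')^2) = k * ((a'*b'-g')^2 * (a-b)^2) := by
    linear_combination (a*b-g)^2 * hF' - (a'*b'-g')^2 * hF +
      2 * (a*b-g) * (a'*b'-g') * hcross
  have hYX : (a*b-g)^2 * (a'-b')^2 = (a'*b'-g')^2 * (a-b)^2 :=
    mul_left_cancel₀ hkpos.ne' h5
  have hcx : c - (a-b)^2 = 2 * (a*b-g) := by linarith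
  have hcy : c - (a'-b')^2 = 2 * (a'*b'-g') := by linarith
  have h6 : (c - (a-b)^2)^2 * (a'-b')^2 = (c - (a'-b')^2)^2 * (a-b)^2 := by
    rw [hcx, hcy]
    linear_combination 4 * hYX
  have h7 : ((a'-b')^2 - (a-b)^2) * (c^2 - (a-b)^2 * (a'-b')^2) = 0 := by
    linear_combination h6
  have hXc : (a-b)^2 < c := by linarith
  have hYc : (a'-b')^2 < c := by linarith
  have h8 : 0 < c^2 - (a-b)^2 * (a'-b')^2 := by
    have h81 : (a-b)^2 * (a'-b')^2 < c * c :=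
      mul_lt_mul'' hXc hYc hXpos.le hYpos.le
    have hc2 : c^2 = c * c := sq c
    linarith
  have hXY : (a-b)^2 = (a'-b')^2 := by
    rcases mul_eq_zero.mp h7 with h | h
    · linarith
    · linarith
  -- equal κ and equal products
  have hκκ : a * b - g = a' * b' - g' := by linarith
  have hp : a * b = a' * b' := by
    have : (a*b-g) * (a'*b') = (a*b-g) * (a*b) := by rw [hcross, hκκ]
    exact (mul_left_cancel₀ hκ.ne' this).symm
  -- equal differences
  have hqq : a - b = a' - b' := by
    have h9 : ((a-b) - (a'-b')) * ((a-b) + (a'-b')) = 0 := by linear_combination hXY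
    rcases mul_eq_zero.mp h9 with h | h
    · linarith
    · exfalso
      have hz : a' - b' = -(a - b) := by linarith
      rw [hz] at hsgn
      have h10 : (a - b) * -(a - b) = -((a - b) * (a - b)) := by ring
      rw [h10] at hsgn
      linarith [mul_self_nonneg (a - b)]
  -- equal sums
  have hsum : a + b = a' + b' := by
    apply eq_of_sq_eq' (by linarith) (by linarith)
    linear_combination hXY + 4 * hp
  exact ⟨by linarith, by linarith⟩

/-- Two triangles on the same base `AB`, with equal opposite angles at `C` and `C'`,
with `C, C'` strictly on the same side of line `AB` and of the perpendicular bisector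
of `AB`, and with equal external angle bisector segments at `C` and `C'` (from the
vertex to line `AB`, the external bisector being perpendicular to the internal one),
are congruent. -/
theorem congr_of_external_bisector (A B C C' D D' E E' : Pt)
    (hABC : AffineIndependent ℝ ![A, B, C])
    (hABC' : AffineIndependent ℝ ![A, B, C'])
    (hang : ∠ A C B = ∠ A C' B)
    (hside : (affineSpan ℝ ({A, B} : Set Pt)).SSameSide C C')
    (hside' : (AffineSubspace.perpBisector A B).SSameSide C C')
    (hD : D ∈ segment ℝ A B) (hbisD : ∠ A C D = ∠ B C D)
    (hD' : D' ∈ segment ℝ A B) (hbisD' : ∠ A C' D' = ∠ B C' D')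
    (hE : E ∈ affineSpan ℝ ({A, B} : Set Pt))
    (hperp : (inner ℝ (E -ᵥ C) (D -ᵥ C) : ℝ) = 0)
    (hE' : E' ∈ affineSpan ℝ ({A, B} : Set Pt))
    (hperp' : (inner ℝ (E' -ᵥ C') (D' -ᵥ C') : ℝ) = 0)
    (hlen : dist C E = dist C' E') :
    C = C' := by
  obtain ⟨s, H, hH, hb2, ha2, hcγ, hF2, hab, hmid⟩ :=
    triangle_aux A B C D E hABC hD hbisD hE hperp
  obtain ⟨s', H', hH', hb2', ha2', hcγ', hF2', hab', hmid'⟩ :=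
    triangle_aux A B C' D' E' hABC' hD' hbisD' hE' hperp'
  have hAB : A ≠ B := by
    intro h
    exact (hABC.injective.ne (by decide : (0 : Fin 3) ≠ 1)) (by simpa using h)
  have hvne : (B -ᵥ A : Pt) ≠ 0 := fun h => hAB (vsub_eq_zero_iff_eq.mp h).symm
  have hcpos : (0:ℝ) < ‖(B -ᵥ A : Pt)‖^2 := pow_pos (norm_pos_iff.mpr hvne) 2
  -- positivity of the side lengths
  have hbpos : 0 < dist C A := by
    have h2 : 0 < (dist C A)^2 := by
      have h3 : (0:ℝ) ≤ s^2 * ‖(B -ᵥ A : Pt)‖^2 := mul_nonneg (sq_nonneg _) (sq_nonneg _)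
      rw [hb2]; linarith
    have h0 : 0 ≤ dist C A := dist_nonneg
    exact lt_of_le_of_ne h0 (fun h => by rw [← h] at h2; norm_num at h2)
  have hapos : 0 < dist C B := by
    have h2 : 0 < (dist C B)^2 := by
      have h3 : (0:ℝ) ≤ (1-s)^2 * ‖(B -ᵥ A : Pt)‖^2 := mul_nonneg (sq_nonneg _) (sq_nonneg _)
      rw [ha2]; linarith
    have h0 : 0 ≤ dist C B := dist_nonneg
    exact lt_of_le_of_ne h0 (fun h => by rw [← h] at h2; norm_num at h2)
  have hbpos' : 0 < dist C' A := by
    have h2 : 0 < (dist C' A)^2 := by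
      have h3 : (0:ℝ) ≤ s'^2 * ‖(B -ᵥ A : Pt)‖^2 := mul_nonneg (sq_nonneg _) (sq_nonneg _)
      rw [hb2']; linarith
    have h0 : 0 ≤ dist C' A := dist_nonneg
    exact lt_of_le_of_ne h0 (fun h => by rw [← h] at h2; norm_num at h2)
  have hapos' : 0 < dist C' B := by
    have h2 : 0 < (dist C' B)^2 := by
      have h3 : (0:ℝ) ≤ (1-s')^2 * ‖(B -ᵥ A : Pt)‖^2 := mul_nonneg (sq_nonneg _) (sq_nonneg _)
      rw [ha2']; linarith
    have h0 : 0 ≤ dist C' B := dist_nonneg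
    exact lt_of_le_of_ne h0 (fun h => by rw [← h] at h2; norm_num at h2)
  -- cosine equality from the equal angles
  have hcos := congrArg Real.cos hang
  rw [EuclideanGeometry.angle, EuclideanGeometry.angle,
    InnerProductGeometry.cos_angle, InnerProductGeometry.cos_angle] at hcos
  have nb : ‖(A -ᵥ C : Pt)‖ = dist C A := by rw [dist_comm, dist_eq_norm_vsub Pt]
  have na : ‖(B -ᵥ C : Pt)‖ = dist C B := by rw [dist_comm, dist_eq_norm_vsub Pt]
  have nb' : ‖(A -ᵥ C' : Pt)‖ = dist C' A := by rw [dist_comm, dist_eq_norm_vsub Pt]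
  have na' : ‖(B -ᵥ C' : Pt)‖ = dist C' B := by rw [dist_comm, dist_eq_norm_vsub Pt]
  rw [nb, na, nb', na', div_eq_div_iff (by positivity) (by positivity)] at hcos
  -- kappa positivity
  have hkid : ((dist C B * dist C A) - inner ℝ (A -ᵥ C) (B -ᵥ C)) *
      ((dist C B * dist C A) + inner ℝ (A -ᵥ C) (B -ᵥ C)) = ‖(B -ᵥ A : Pt)‖^2 * H := by
    linear_combination (dist C A)^2 * ha2 + ((1-s)^2 * ‖(B -ᵥ A : Pt)‖^2 + H) * hb2 -
      ((inner ℝ (A -ᵥ C) (B -ᵥ C) : ℝ) + (H - s * (1-s) * ‖(B -ᵥ A : Pt)‖^2)) * hcγ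
  have hkid' : ((dist C' B * dist C' A) - inner ℝ (A -ᵥ C') (B -ᵥ C')) *
      ((dist C' B * dist C' A) + inner ℝ (A -ᵥ C') (B -ᵥ C')) = ‖(B -ᵥ A : Pt)‖^2 * H' := by
    linear_combination (dist C' A)^2 * ha2' + ((1-s')^2 * ‖(B -ᵥ A : Pt)‖^2 + H') * hb2' -
      ((inner ℝ (A -ᵥ C') (B -ᵥ C') : ℝ) + (H' - s' * (1-s') * ‖(B -ᵥ A : Pt)‖^2)) * hcγ'
  have hκ : 0 < dist C B * dist C A - inner ℝ (A -ᵥ C) (B -ᵥ C) :=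
    kappa_pos' (mul_pos hapos hbpos) (mul_pos hcpos hH) hkid
  have hκ' : 0 < dist C' B * dist C' A - inner ℝ (A -ᵥ C') (B -ᵥ C') :=
    kappa_pos' (mul_pos hapos' hbpos') (mul_pos hcpos hH') hkid'
  -- law of cosines (in our coordinates)
  have hq : ‖(B -ᵥ A : Pt)‖^2 = (dist C B - dist C A)^2 +
      2 * (dist C B * dist C A - inner ℝ (A -ᵥ C) (B -ᵥ C)) := by
    linear_combination 2 * hcγ - ha2 - hb2
  have hq' : ‖(B -ᵥ A : Pt)‖^2 = (dist C' B - dist C' A)^2 +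
      2 * (dist C' B * dist C' A - inner ℝ (A -ᵥ C') (B -ᵥ C')) := by
    linear_combination 2 * hcγ' - ha2' - hb2'
  -- cross relation from the cosine equality
  have hcross : (dist C B * dist C A - inner ℝ (A -ᵥ C) (B -ᵥ C)) * (dist C' B * dist C' A)
      = (dist C' B * dist C' A - inner ℝ (A -ᵥ C') (B -ᵥ C')) * (dist C B * dist C A) := by
    linear_combination -hcos
  -- sign condition from the same side of the perpendicular bisector
  have hs12 : s ≠ 1/2 := by
    intro h
    apply hab
    apply eq_of_sq_eq' dist_nonneg dist_nonneg
    rw [ha2, hb2, h]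
    ring
  have hs12' : s' ≠ 1/2 := by
    intro h
    apply hab'
    apply eq_of_sq_eq' dist_nonneg dist_nonneg
    rw [ha2', hb2', h]
    ring
  obtain ⟨⟨p₁, hp₁, p₂, hp₂, hray⟩, _, _⟩ := hside'
  have hray2 : SameRay ℝ ((inner ℝ (B -ᵥ A) (C -ᵥ p₁) : ℝ)) ((inner ℝ (B -ᵥ A) (C' -ᵥ p₂) : ℝ)) :=
    hray.map (innerₛₗ ℝ (B -ᵥ A))
  have hv1 : (inner ℝ (B -ᵥ A) (C -ᵥ p₁) : ℝ) = (s - 1/2) * ‖(B -ᵥ A : Pt)‖^2 := by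
    rw [inner_vsub_of_mem_perpBisector hp₁, real_inner_comm, hmid]
  have hv2 : (inner ℝ (B -ᵥ A) (C' -ᵥ p₂) : ℝ) = (s' - 1/2) * ‖(B -ᵥ A : Pt)‖^2 := by
    rw [inner_vsub_of_mem_perpBisector hp₂, real_inner_comm, hmid']
  rw [hv1, hv2] at hray2
  have hne1 : (s - 1/2) * ‖(B -ᵥ A : Pt)‖^2 ≠ 0 :=
    mul_ne_zero (sub_ne_zero.mpr hs12) hcpos.ne'
  have hne2 : (s' - 1/2) * ‖(B -ᵥ A : Pt)‖^2 ≠ 0 :=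
    mul_ne_zero (sub_ne_zero.mpr hs12') hcpos.ne'
  have hprod := sameRay_pos hray2 hne1 hne2
  have hss : 0 < (s - 1/2) * (s' - 1/2) := by
    have h1 : 0 < ((s - 1/2) * (s' - 1/2)) * (‖(B -ᵥ A : Pt)‖^2 * ‖(B -ᵥ A : Pt)‖^2) := by
      have h2 : ((s - 1/2) * ‖(B -ᵥ A : Pt)‖^2) * ((s' - 1/2) * ‖(B -ᵥ A : Pt)‖^2)
          = ((s - 1/2) * (s' - 1/2)) * (‖(B -ᵥ A : Pt)‖^2 * ‖(B -ᵥ A : Pt)‖^2) := by ring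
      rw [← h2]
      exact hprod
    exact pos_of_mul_pos_right' h1 (mul_pos hcpos hcpos)
  -- convert to a sign condition on the differences of side lengths
  have hd1 : (dist C B)^2 - (dist C A)^2 = (1 - 2*s) * ‖(B -ᵥ A : Pt)‖^2 := by
    linear_combination ha2 - hb2
  have hd1' : (dist C' B)^2 - (dist C' A)^2 = (1 - 2*s') * ‖(B -ᵥ A : Pt)‖^2 := by
    linear_combination ha2' - hb2'
  have hsgn : 0 < (dist C B - dist C A) * (dist C' B - dist C' A) := by
    have h3 : ((dist C B)^2 - (dist C A)^2) * ((dist C' B)^2 - (dist C' A)^2)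
        = ((1-2*s) * (1-2*s')) * (‖(B -ᵥ A : Pt)‖^2 * ‖(B -ᵥ A : Pt)‖^2) := by
      rw [hd1, hd1']; ring
    have h4 : 0 < ((1-2*s) * (1-2*s')) * (‖(B -ᵥ A : Pt)‖^2 * ‖(B -ᵥ A : Pt)‖^2) := by
      have h5 : (0:ℝ) < (1-2*s) * (1-2*s') := by
        have : (1-2*s) * (1-2*s') = 4 * ((s - 1/2) * (s' - 1/2)) := by ring
        rw [this]; linarith
      exact mul_pos h5 (mul_pos hcpos hcpos)
    have h6 : 0 < ((dist C B - dist C A) * (dist C' B - dist C' A)) *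
        ((dist C B + dist C A) * (dist C' B + dist C' A)) := by
      have h7 : ((dist C B)^2 - (dist C A)^2) * ((dist C' B)^2 - (dist C' A)^2)
          = ((dist C B - dist C A) * (dist C' B - dist C' A)) *
            ((dist C B + dist C A) * (dist C' B + dist C' A)) := by ring
      rw [← h7, h3]
      exact h4
    exact pos_of_mul_pos_right' h6
      (mul_pos (by linarith : (0:ℝ) < dist C B + dist C A)
        (by linarith : (0:ℝ) < dist C' B + dist C' A))
  -- rewrite the bisector-length equation using hlen
  rw [hlen] at hF2
  -- apply the key algebraic lemma
  obtain ⟨haeq, hbeq⟩ := key_alg hapos hbpos hapos' hbpos' hκ hκ' hq hq'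
    hF2 hF2' hab hab' hcross hsgn
  -- conclude C = C'
  by_contra hne
  have hAmem : A ∈ AffineSubspace.perpBisector C C' := by
    rw [AffineSubspace.mem_perpBisector_iff_dist_eq, dist_comm A C, dist_comm A C']
    exact hbeq
  have hBmem : B ∈ AffineSubspace.perpBisector C C' := by
    rw [AffineSubspace.mem_perpBisector_iff_dist_eq, dist_comm B C, dist_comm B C']
    exact haeq
  have hsub : affineSpan ℝ ({A, B} : Set Pt) ≤ AffineSubspace.perpBisector C C' := by
    rw [affineSpan_le]
    intro x hx
    rcases hx with h | h
    · rw [h]; exact hAmem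
    · rw [Set.mem_singleton_iff.mp h]; exact hBmem
  obtain ⟨⟨q₁, hq₁, q₂, hq₂, hray'⟩, _, _⟩ := hside
  have hray3 : SameRay ℝ ((inner ℝ (C' -ᵥ C) (C -ᵥ q₁) : ℝ)) ((inner ℝ (C' -ᵥ C) (C' -ᵥ q₂) : ℝ)) :=
    hray'.map (innerₛₗ ℝ (C' -ᵥ C))
  have huvne : (C' -ᵥ C : Pt) ≠ 0 := fun h => hne (vsub_eq_zero_iff_eq.mp h).symm
  have hun : (0:ℝ) < ‖(C' -ᵥ C : Pt)‖^2 := pow_pos (norm_pos_iff.mpr huvne) 2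
  have e1 : (inner ℝ (C' -ᵥ C) (C -ᵥ C') : ℝ) = -(‖(C' -ᵥ C : Pt)‖^2) := by
    rw [← neg_vsub_eq_vsub_rev C' C, inner_neg_right, real_inner_self_eq_norm_sq]
  have hw1 : (inner ℝ (C' -ᵥ C) (C -ᵥ q₁) : ℝ) = -(1/2) * ‖(C' -ᵥ C : Pt)‖^2 := by
    rw [inner_vsub_of_mem_perpBisector (hsub hq₁), left_vsub_midpoint, real_inner_smul_right,
      e1, invOf_eq_inv]
    ring
  have hw2 : (inner ℝ (C' -ᵥ C) (C' -ᵥ q₂) : ℝ) = (1/2) * ‖(C' -ᵥ C : Pt)‖^2 := by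
    rw [inner_vsub_of_mem_perpBisector (hsub hq₂), right_vsub_midpoint, real_inner_smul_right,
      real_inner_self_eq_norm_sq, invOf_eq_inv]
    ring
  rw [hw1, hw2] at hray3
  have hne1' : -(1/2) * ‖(C' -ᵥ C : Pt)‖^2 ≠ (0:ℝ) := by
    intro h
    linarith
  have hne2' : (1/2) * ‖(C' -ᵥ C : Pt)‖^2 ≠ (0:ℝ) := by
    intro h
    linarith
  have hcontra := sameRay_pos hray3 hne1' hne2'
  have hfin : (-(1/2) * ‖(C' -ᵥ C : Pt)‖^2) * ((1/2) * ‖(C' -ᵥ C : Pt)‖^2)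
      = -(1/4) * (‖(C' -ᵥ C : Pt)‖^2 * ‖(C' -ᵥ C : Pt)‖^2) := by ring
  rw [hfin] at hcontra
  linarith [mul_pos hun hun]

end
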